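/- arXiv:0902.0637 — 3 statements merged into one kernel-verified Lean document; each statement's English description precedes it below -/
import Mathlib

section
/- Let N ≥ 1, 1 < p < ∞ and q = p/(p−1). Let u ∈ L^p(ℝ^N) be nonnegative, let H ⊂ ℝ^N be a closed halfspace with 0 ∈ H, and let w ∈ L^q(ℝ^N) be nonnegative, radial and radially nonincreasing. Then ∫_{ℝ^N} u w ≤ ∫_{ℝ^N} u^H w. -/
open MeasureTheory Filter

/-- Reflection across the boundary hyperplane `{x : ⟪a,x⟫ = b}` of the closed
halfspace `H = {x : ⟪a,x⟫ ≤ b}` (for `‖a‖ = 1`). -/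
noncomputable def reflectH {N : ℕ} (a : EuclideanSpace ℝ (Fin N)) (b : ℝ)
    (x : EuclideanSpace ℝ (Fin N)) : EuclideanSpace ℝ (Fin N) :=
  x - (2 * ((inner ℝ a x : ℝ) - b)) • a

/-- Polarization (two-point rearrangement) of `u` with respect to the closed halfspace
`H = {x : ⟪a,x⟫ ≤ b}` (for `‖a‖ = 1`). -/
noncomputable def polarization {N : ℕ} (a : EuclideanSpace ℝ (Fin N)) (b : ℝ)
    (u : EuclideanSpace ℝ (Fin N) → ℝ) (x : EuclideanSpace ℝ (Fin N)) : ℝ :=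
  if (inner ℝ a x : ℝ) ≤ b then max (u x) (u (reflectH a b x))
  else min (u x) (u (reflectH a b x))

variable {N : ℕ} {a : EuclideanSpace ℝ (Fin N)} {b : ℝ}

lemma inner_reflectH (ha : ‖a‖ = 1) (x : EuclideanSpace ℝ (Fin N)) :
    (inner ℝ a (reflectH a b x) : ℝ) = 2 * b - inner ℝ a x := by
  have h : (inner ℝ a a : ℝ) = 1 := by
    rw [real_inner_self_eq_norm_sq, ha]; norm_num
  rw [reflectH, inner_sub_right, real_inner_smul_right, h]
  ring

lemma reflectH_invol (ha : ‖a‖ = 1) : Function.Involutive (reflectH a b) := by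
  intro x
  have h := inner_reflectH (b := b) ha x
  rw [show reflectH a b (reflectH a b x) =
      reflectH a b x - (2 * ((inner ℝ a (reflectH a b x) : ℝ) - b)) • a from rfl, h, reflectH]
  module

lemma norm_le_reflectH (ha : ‖a‖ = 1) (hb : 0 ≤ b) {x : EuclideanSpace ℝ (Fin N)}
    (hx : (inner ℝ a x : ℝ) ≤ b) : ‖x‖ ≤ ‖reflectH a b x‖ := by
  have h2 : ‖reflectH a b x‖ ^ 2 = ‖x‖ ^ 2 - 4 * ((inner ℝ a x : ℝ) - b) * b := by
    rw [reflectH, norm_sub_sq_real, real_inner_smul_right, real_inner_comm, norm_smul, ha]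
    simp [Real.norm_eq_abs, mul_pow, sq_abs]
    ring
  nlinarith [norm_nonneg x, norm_nonneg (reflectH a b x), sq_nonneg ((inner ℝ a x : ℝ) - b)]

lemma reflectH_eq_reflection (ha : ‖a‖ = 1) (x : EuclideanSpace ℝ (Fin N)) :
    reflectH a b x = (Submodule.reflection (ℝ ∙ a)ᗮ) x + (2 * b) • a := by
  rw [Submodule.reflection_orthogonal_apply, Submodule.reflection_apply, Submodule.starProjection_singleton, ha, reflectH]
  push_cast
  match_scalars <;> ring

lemma reflectH_measurePreserving (ha : ‖a‖ = 1) :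
    MeasurePreserving (reflectH a b) volume volume := by
  have h : reflectH a b = (fun y => y + (2 * b) • a) ∘ (Submodule.reflection (ℝ ∙ a)ᗮ) :=
    funext fun x => reflectH_eq_reflection ha x
  rw [h]
  exact (measurePreserving_add_right volume _).comp
    (LinearIsometryEquiv.measurePreserving _)

lemma reflectH_continuous : Continuous (reflectH a b) := by
  exact continuous_id.sub
    (((continuous_const.mul ((continuous_const.inner continuous_id : Continuous fun x => (inner ℝ a x : ℝ)).sub
      continuous_const))).smul continuous_const)

noncomputable def reflectHEquiv (a : EuclideanSpace ℝ (Fin N)) (b : ℝ) (ha : ‖a‖ = 1) :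
    EuclideanSpace ℝ (Fin N) ≃ᵐ EuclideanSpace ℝ (Fin N) :=
  Homeomorph.toMeasurableEquiv
    { toEquiv := (reflectH_invol (b := b) ha).toPerm _
      continuous_toFun := reflectH_continuous
      continuous_invFun := reflectH_continuous }

lemma aux_real {u1 u2 w1 w2 : ℝ} (h : w2 ≤ w1) :
    u1 * w1 + u2 * w2 ≤ max u1 u2 * w1 + min u1 u2 * w2 := by
  rcases le_total u1 u2 with h' | h'
  · rw [max_eq_right h', min_eq_left h']; nlinarith
  · rw [max_eq_left h', min_eq_right h']


/-- For nonnegative `u ∈ L^p(ℝ^N)`, a closed halfspace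
`H = {x : ⟪a,x⟫ ≤ b}` containing `0` (i.e. `b ≥ 0`), and a nonnegative, radial and radially
nonincreasing `w ∈ L^q(ℝ^N)` (`q = p/(p-1)`), one has `∫ u w ≤ ∫ u^H w`. -/
theorem statement1 {N : ℕ} (hN : 1 ≤ N) (p q : ℝ) (hp : 1 < p) (hq : q = p / (p - 1))
    (u : EuclideanSpace ℝ (Fin N) → ℝ)
    (hu : MemLp u (ENNReal.ofReal p) volume) (hu0 : ∀ x, 0 ≤ u x)
    (a : EuclideanSpace ℝ (Fin N)) (b : ℝ) (ha : ‖a‖ = 1) (hb : 0 ≤ b)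
    (w : EuclideanSpace ℝ (Fin N) → ℝ)
    (hw : MemLp w (ENNReal.ofReal q) volume) (hw0 : ∀ x, 0 ≤ w x)
    (W : ℝ → ℝ) (hW : AntitoneOn W (Set.Ici 0)) (hwW : ∀ x, w x = W ‖x‖) :
    ∫ x, u x * w x ≤ ∫ x, polarization a b u x * w x := by
  have hp0 : (0:ℝ) < p := lt_trans one_pos hp
  have hp1 : (0:ℝ) < p - 1 := by linarith
  have hq0 : (0:ℝ) < q := by rw [hq]; positivity
  -- conjugate exponents in ℝ≥0∞
  have hP1 : (1:ENNReal) / 1 = 1 / ENNReal.ofReal p + 1 / ENNReal.ofReal q := by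
    rw [one_div, one_div, one_div, inv_one, ← ENNReal.ofReal_inv_of_pos hp0,
      ← ENNReal.ofReal_inv_of_pos hq0,
      ← ENNReal.ofReal_add (by positivity) (by positivity), ← ENNReal.ofReal_one]
    congr 1
    rw [hq]
    field_simp
    ring
  have hmp := reflectH_measurePreserving (b := b) ha
  have hemb := (reflectHEquiv a b ha).measurableEmbedding
  have hσσ := reflectH_invol (b := b) ha
  -- u ∘ σ is MemLp
  have huσ : MemLp (fun x => u (reflectH a b x)) (ENNReal.ofReal p) volume :=
    hu.comp_measurePreserving hmp
  -- polarization is MemLp p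
  have hpolm : AEStronglyMeasurable (polarization a b u) volume := by
    have hS : MeasurableSet {x : EuclideanSpace ℝ (Fin N) | (inner ℝ a x : ℝ) ≤ b} :=
      measurableSet_le (Continuous.measurable (continuous_const.inner continuous_id))
        measurable_const
    have hmax : AEStronglyMeasurable (fun x => max (u x) (u (reflectH a b x))) volume :=
      (hu.1.aemeasurable.max huσ.1.aemeasurable).aestronglyMeasurable
    have hmin : AEStronglyMeasurable (fun x => min (u x) (u (reflectH a b x))) volume :=
      (hu.1.aemeasurable.min huσ.1.aemeasurable).aestronglyMeasurable
    have : polarization a b u = fun x =>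
        Set.indicator {x : EuclideanSpace ℝ (Fin N) | (inner ℝ a x : ℝ) ≤ b}
          (fun x => max (u x) (u (reflectH a b x))) x +
        Set.indicator {x : EuclideanSpace ℝ (Fin N) | (inner ℝ a x : ℝ) ≤ b}ᶜ
          (fun x => min (u x) (u (reflectH a b x))) x := by
      funext x
      by_cases h : (inner ℝ a x : ℝ) ≤ b
      · have hxS : x ∈ {x : EuclideanSpace ℝ (Fin N) | (inner ℝ a x : ℝ) ≤ b} := h
        rw [polarization, if_pos h, Set.indicator_of_mem hxS,
          Set.indicator_of_notMem (Set.notMem_compl_iff.mpr hxS), add_zero]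
      · have hxS : x ∉ {x : EuclideanSpace ℝ (Fin N) | (inner ℝ a x : ℝ) ≤ b} := h
        rw [polarization, if_neg h, Set.indicator_of_notMem hxS,
          Set.indicator_of_mem (Set.mem_compl hxS), zero_add]
    rw [this]
    exact (hmax.indicator hS).add (hmin.indicator hS.compl)
  have hpol : MemLp (polarization a b u) (ENNReal.ofReal p) volume := by
    refine MemLp.of_le (hu.add huσ) hpolm (Filter.Eventually.of_forall fun x => ?_)
    simp only [Real.norm_eq_abs, Pi.add_apply]
    have h0 : 0 ≤ polarization a b u x := by
      rcases le_or_gt (inner ℝ a x : ℝ) b with h | h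
      · simp only [polarization, if_pos h]; exact le_max_of_le_left (hu0 x)
      · simp only [polarization, if_neg (not_le.mpr h)]
        exact le_min (hu0 x) (hu0 _)
    have h1 : polarization a b u x ≤ u x + u (reflectH a b x) := by
      rcases le_or_gt (inner ℝ a x : ℝ) b with h | h
      · simp only [polarization, if_pos h]
        exact max_le (by linarith [hu0 (reflectH a b x)]) (by linarith [hu0 x])
      · simp only [polarization, if_neg (not_le.mpr h)]
        exact le_trans (min_le_left _ _) (by linarith [hu0 (reflectH a b x)])
    rw [abs_of_nonneg h0, abs_of_nonneg (by linarith [hu0 x, hu0 (reflectH a b x)])]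
    exact h1
  -- integrability of the four functions
  have hFint : Integrable (fun x => u x * w x) volume := by
    have := memLp_one_iff_integrable.mp (hw.smul hu (hpqr := ⟨by simpa only [one_div] using hP1.symm⟩))
    exact this.congr (Filter.Eventually.of_forall fun x => rfl)
  have hGint : Integrable (fun x => polarization a b u x * w x) volume := by
    have := memLp_one_iff_integrable.mp (hw.smul hpol (hpqr := ⟨by simpa only [one_div] using hP1.symm⟩))
    exact this.congr (Filter.Eventually.of_forall fun x => rfl)
  have hFσint : Integrable (fun x => u (reflectH a b x) * w (reflectH a b x)) volume :=
    memLp_one_iff_integrable.mp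
      ((memLp_one_iff_integrable.mpr hFint).comp_measurePreserving hmp)
  have hGσint : Integrable
      (fun x => polarization a b u (reflectH a b x) * w (reflectH a b x)) volume :=
    memLp_one_iff_integrable.mp
      ((memLp_one_iff_integrable.mpr hGint).comp_measurePreserving hmp)
  -- pointwise inequality
  have hpt : ∀ x, u x * w x + u (reflectH a b x) * w (reflectH a b x) ≤
      polarization a b u x * w x +
      polarization a b u (reflectH a b x) * w (reflectH a b x) := by
    intro x
    have h1 : (inner ℝ a (reflectH a b x) : ℝ) = 2 * b - inner ℝ a x := inner_reflectH ha x
    by_cases hx : (inner ℝ a x : ℝ) ≤ b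
    · by_cases hx2 : (inner ℝ a (reflectH a b x) : ℝ) ≤ b
      · have ht : (inner ℝ a x : ℝ) = b := by rw [h1] at hx2; linarith
        have hfix : reflectH a b x = x := by
          rw [reflectH, ht]; simp
        simp [polarization, hx, hfix]
      · have hw' : w (reflectH a b x) ≤ w x := by
          rw [hwW, hwW]
          exact hW (Set.mem_Ici.mpr (norm_nonneg _)) (Set.mem_Ici.mpr (norm_nonneg _))
            (norm_le_reflectH ha hb hx)
        simp only [polarization, if_pos hx, if_neg hx2, hσσ x]
        rw [min_comm]
        exact aux_real hw'
    · have hx2 : (inner ℝ a (reflectH a b x) : ℝ) ≤ b := by rw [h1]; push_neg at hx; linarith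
      have hw' : w x ≤ w (reflectH a b x) := by
        rw [hwW, hwW]
        refine hW (Set.mem_Ici.mpr (norm_nonneg _)) (Set.mem_Ici.mpr (norm_nonneg _)) ?_
        have := norm_le_reflectH ha hb (x := reflectH a b x) hx2
        rwa [hσσ x] at this
      simp only [polarization, if_neg hx, if_pos hx2, hσσ x]
      rw [min_comm]
      have := aux_real (u1 := u (reflectH a b x)) (u2 := u x)
        (w1 := w (reflectH a b x)) (w2 := w x) hw'
      linarith
  -- integrate
  have hmono : ∫ x, (u x * w x + u (reflectH a b x) * w (reflectH a b x)) ≤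
      ∫ x, (polarization a b u x * w x +
        polarization a b u (reflectH a b x) * w (reflectH a b x)) :=
    integral_mono (hFint.add hFσint) (hGint.add hGσint) fun x => hpt x
  rw [integral_add hFint hFσint, integral_add hGint hGσint] at hmono
  have hemb' : MeasurableEmbedding (reflectH a b) := hemb
  have hFσ : ∫ x, u (reflectH a b x) * w (reflectH a b x) = ∫ x, u x * w x :=
    hmp.integral_comp hemb' (fun y => u y * w y)
  have hGσ : ∫ x, polarization a b u (reflectH a b x) * w (reflectH a b x) =
      ∫ x, polarization a b u x * w x :=
    hmp.integral_comp hemb' (fun y => polarization a b u y * w y)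
  rw [hFσ, hGσ] at hmono
  linarith
end

section
/- Let N ≥ 1, 1 ≤ p < ∞ and let u ∈ L^p(ℝ^N) be nonnegative. Then u = u* almost everywhere (where u* is the symmetric decreasing rearrangement of u) if and only if for almost every pair (x,y) ∈ ℝ^N × ℝ^N with ‖x‖ ≤ ‖y‖ one has u(x) ≥ u(y). -/
open MeasureTheory Filter

/-- The symmetric decreasing rearrangement (Schwarz symmetrization) of `u`:
`u⋆ x = sup {l > 0 : vol {u > l} > vol (B(0,‖x‖))}`, with `sup ∅ = 0`. -/
noncomputable def schwarz {N : ℕ} (u : EuclideanSpace ℝ (Fin N) → ℝ)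
    (x : EuclideanSpace ℝ (Fin N)) : ℝ :=
  sSup {l : ℝ | 0 < l ∧
    volume (Metric.ball (0 : EuclideanSpace ℝ (Fin N)) ‖x‖) < volume {y | l < u y}}

section Aux

variable {N : ℕ}

local notation "E" => EuclideanSpace ℝ (Fin N)

/-- The radius of the centered ball of volume `m`. -/
noncomputable def Rad (N : ℕ) (m : ENNReal) : ℝ :=
  ((m / volume (Metric.ball (0 : EuclideanSpace ℝ (Fin N)) 1)).toReal) ^ ((N : ℝ)⁻¹)

lemma aux_nontrivial (hN : 1 ≤ N) : Nontrivial (EuclideanSpace ℝ (Fin N)) := by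
  have : 0 < Module.finrank ℝ (EuclideanSpace ℝ (Fin N)) := by
    rw [finrank_euclideanSpace_fin]; omega
  exact Module.nontrivial_of_finrank_pos this

lemma aux_vol_ball (hN : 1 ≤ N) {r : ℝ} (hr : 0 ≤ r) :
    volume (Metric.ball (0 : E) r)
      = ENNReal.ofReal (r ^ N) * volume (Metric.ball (0 : E) 1) := by
  haveI := aux_nontrivial hN
  rw [Measure.addHaar_ball _ _ hr, finrank_euclideanSpace_fin]

lemma aux_ball_lt_iff (hN : 1 ≤ N) {m : ENNReal} (hm : m ≠ ⊤) (x : E) :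
    volume (Metric.ball (0 : E) ‖x‖) < m ↔ ‖x‖ < Rad N m := by
  set κ := volume (Metric.ball (0 : E) 1) with hκ
  have hκ0 : κ ≠ 0 := (Metric.measure_ball_pos _ _ one_pos).ne'
  have hκt : κ ≠ ⊤ := measure_ball_lt_top.ne
  have hdiv : m / κ ≠ ⊤ := (ENNReal.div_lt_top hm hκ0).ne
  have hNpos : (0:ℝ) < (N:ℝ) := by positivity
  rw [aux_vol_ball hN (norm_nonneg x), ← hκ,
    ← ENNReal.lt_div_iff_mul_lt (Or.inl hκ0) (Or.inl hκt),
    ENNReal.ofReal_lt_iff_lt_toReal (by positivity) hdiv, Rad, ← hκ,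
    ← Real.rpow_natCast ‖x‖ N,
    ← Real.lt_rpow_inv_iff_of_pos (norm_nonneg x) ENNReal.toReal_nonneg hNpos]

lemma aux_vol_ball_Rad (hN : 1 ≤ N) {m : ENNReal} (hm : m ≠ ⊤) :
    volume (Metric.ball (0 : E) (Rad N m)) = m := by
  set κ := volume (Metric.ball (0 : E) 1) with hκ
  have hκ0 : κ ≠ 0 := (Metric.measure_ball_pos _ _ one_pos).ne'
  have hκt : κ ≠ ⊤ := measure_ball_lt_top.ne
  have hdiv : m / κ ≠ ⊤ := (ENNReal.div_lt_top hm hκ0).ne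
  have hN0 : (N : ℝ) ≠ 0 := by
    have : (0:ℝ) < (N:ℝ) := by positivity
    exact this.ne'
  have hRad : 0 ≤ Rad N m := Real.rpow_nonneg ENNReal.toReal_nonneg _
  rw [aux_vol_ball hN hRad, ← hκ, Rad, ← hκ, ← Real.rpow_natCast _ N,
    Real.rpow_inv_rpow ENNReal.toReal_nonneg hN0, ENNReal.ofReal_toReal hdiv,
    ENNReal.div_mul_cancel hκ0 hκt]

lemma aux_levelset_finite {p : ℝ} (hp : 1 ≤ p) {g : E → ℝ}
    (hgp : MemLp g (ENNReal.ofReal p) volume) {l : ℝ} (hl : 0 < l) :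
    volume {y : E | l < g y} ≠ ⊤ := by
  have hq0 : (ENNReal.ofReal p) ≠ 0 := by
    simp [ENNReal.ofReal_eq_zero]; linarith
  have hqt : (ENNReal.ofReal p) ≠ ⊤ := ENNReal.ofReal_ne_top
  have hsub : {y : E | l < g y} ⊆ {y : E | ENNReal.ofReal l ≤ (‖g y‖₊ : ENNReal)} := by
    intro y hy
    simp only [Set.mem_setOf_eq] at hy ⊢
    rw [← enorm_eq_nnnorm, ← ofReal_norm]
    exact ENNReal.ofReal_le_ofReal (le_trans hy.le (le_abs_self _))
  have hε : (ENNReal.ofReal l) ≠ 0 := by simp [ENNReal.ofReal_eq_zero]; linarith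
  have := meas_ge_le_mul_pow_eLpNorm_enorm volume hq0 hqt hgp.aestronglyMeasurable hε
    (fun h => absurd h ENNReal.ofReal_ne_top)
  refine ne_top_of_le_ne_top ?_ ((measure_mono hsub).trans this)
  exact ENNReal.mul_ne_top
    (ENNReal.rpow_ne_top_of_nonneg ENNReal.toReal_nonneg (by simp [hε]))
    (ENNReal.rpow_ne_top_of_nonneg ENNReal.toReal_nonneg hgp.eLpNorm_ne_top)

lemma aux_levelset_anti' (g : E → ℝ) {a b : ℝ} (hab : a ≤ b) :
    volume {y : E | b < g y} ≤ volume {y : E | a < g y} :=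
  measure_mono (fun _ hy => lt_of_le_of_lt hab hy)

lemma aux_right_cont {g : E → ℝ} {l : ℝ} {v : ENNReal}
    (hv : v < volume {y : E | l < g y}) :
    ∃ l' > l, v < volume {y : E | l' < g y} := by
  have hun : {y : E | l < g y} = ⋃ n : ℕ, {y : E | l + 1/(n+1) < g y} := by
    ext y
    simp only [Set.mem_setOf_eq, Set.mem_iUnion]
    constructor
    · intro hy
      obtain ⟨n, hn⟩ := exists_nat_one_div_lt (sub_pos.mpr hy)
      exact ⟨n, by linarith⟩
    · rintro ⟨n, hn⟩
      have : (0:ℝ) < 1/(n+1) := by positivity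
      linarith
  have hmono : Monotone (fun n : ℕ => {y : E | l + 1/(n+1) < g y}) := by
    intro a b hab y hy
    simp only [Set.mem_setOf_eq] at hy ⊢
    have h1 : (1:ℝ)/(b+1) ≤ 1/(a+1) := by
      apply one_div_le_one_div_of_le (by positivity)
      have := (Nat.cast_le (α := ℝ)).mpr hab; linarith
    linarith
  rw [hun, hmono.measure_iUnion] at hv
  obtain ⟨n, hn⟩ := lt_iSup_iff.mp hv
  refine ⟨l + 1/(n+1), ?_, hn⟩
  have : (0:ℝ) < 1/(n+1) := by positivity
  linarith

lemma aux_inf_zero {p : ℝ} (hp : 1 ≤ p) {g : E → ℝ} (hg : Measurable g)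
    (hgp : MemLp g (ENNReal.ofReal p) volume) {v : ENNReal} (hv : v ≠ 0) :
    ∃ n : ℕ, volume {y : E | ((n:ℝ)+1) < g y} < v := by
  have hanti : Antitone (fun n : ℕ => {y : E | ((n:ℝ)+1) < g y}) := by
    intro a b hab y hy
    simp only [Set.mem_setOf_eq] at hy ⊢
    have : (a:ℝ) ≤ (b:ℝ) := Nat.cast_le.mpr hab
    linarith
  have hempty : (⋂ n : ℕ, {y : E | ((n:ℝ)+1) < g y}) = ∅ := by
    ext y
    simp only [Set.mem_iInter, Set.mem_setOf_eq, Set.mem_empty_iff_false, iff_false, not_forall,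
      not_lt]
    obtain ⟨n, hn⟩ := exists_nat_gt (g y)
    exact ⟨n, by linarith⟩
  have := hanti.measure_iInter
    (fun n => (measurableSet_lt measurable_const hg).nullMeasurableSet)
    ⟨0, aux_levelset_finite hp hgp (by norm_num)⟩
  rw [hempty, measure_empty] at this
  have h0 : (⨅ n : ℕ, volume {y : E | ((n:ℝ)+1) < g y}) < v := by
    rw [← this]; exact pos_iff_ne_zero.mpr hv
  exact iInf_lt_iff.mp h0

lemma schwarz_nonneg (u : E → ℝ) (x : E) : 0 ≤ schwarz u x := by
  unfold schwarz
  set S := {l : ℝ | 0 < l ∧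
    volume (Metric.ball (0 : E) ‖x‖) < volume {y | l < u y}} with hS
  by_cases hbdd : BddAbove S
  · rcases Set.eq_empty_or_nonempty S with h | h
    · rw [h, Real.sSup_empty]
    · obtain ⟨l, hl⟩ := h
      exact le_trans hl.1.le (le_csSup hbdd hl)
  · rw [Real.sSup_of_not_bddAbove hbdd]

lemma aux_bddAbove {p : ℝ} (hp : 1 ≤ p) {g : E → ℝ} (hg : Measurable g)
    (hgp : MemLp g (ENNReal.ofReal p) volume) {x : E} (hx : x ≠ 0) :
    BddAbove {l : ℝ | 0 < l ∧
      volume (Metric.ball (0 : E) ‖x‖) < volume {y | l < g y}} := by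
  have hv : volume (Metric.ball (0 : E) ‖x‖) ≠ 0 :=
    (Metric.measure_ball_pos _ _ (norm_pos_iff.mpr hx)).ne'
  obtain ⟨n, hn⟩ := aux_inf_zero hp hg hgp hv
  refine ⟨(n:ℝ)+1, fun l hl => ?_⟩
  by_contra hc
  push_neg at hc
  exact absurd (lt_of_le_of_lt (aux_levelset_anti' g hc.le) hn) (not_lt.mpr hl.2.le)

lemma schwarz_gt_iff {p : ℝ} (hp : 1 ≤ p) {g : E → ℝ} (hg : Measurable g)
    (hgp : MemLp g (ENNReal.ofReal p) volume) {x : E} (hx : x ≠ 0) {l : ℝ} (hl : 0 < l) :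
    l < schwarz g x ↔
      volume (Metric.ball (0 : E) ‖x‖) < volume {y | l < g y} := by
  set S := {l : ℝ | 0 < l ∧
    volume (Metric.ball (0 : E) ‖x‖) < volume {y | l < g y}} with hS
  have hbdd : BddAbove S := aux_bddAbove hp hg hgp hx
  constructor
  · intro h
    rcases Set.eq_empty_or_nonempty S with he | hne
    · exfalso
      have hz : schwarz g x = 0 := by unfold schwarz; rw [← hS, he, Real.sSup_empty]
      rw [hz] at h; linarith
    · obtain ⟨l', hl', hll'⟩ := (lt_csSup_iff hbdd hne).mp h
      exact lt_of_lt_of_le hl'.2 (aux_levelset_anti' g hll'.le)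
  · intro h
    obtain ⟨l', hl', hvl'⟩ := aux_right_cont h
    have hmem : l' ∈ S := ⟨lt_trans hl hl', hvl'⟩
    exact lt_of_lt_of_le hl' (le_csSup hbdd hmem)

lemma schwarz_anti {p : ℝ} (hp : 1 ≤ p) {g : E → ℝ} (hg : Measurable g)
    (hgp : MemLp g (ENNReal.ofReal p) volume) {x y : E} (hx : x ≠ 0) (hxy : ‖x‖ ≤ ‖y‖) :
    schwarz g y ≤ schwarz g x := by
  have hsub : {l : ℝ | 0 < l ∧
        volume (Metric.ball (0 : E) ‖y‖) < volume {z | l < g z}}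
      ⊆ {l : ℝ | 0 < l ∧
        volume (Metric.ball (0 : E) ‖x‖) < volume {z | l < g z}} := by
    intro l hl
    exact ⟨hl.1, lt_of_le_of_lt (measure_mono (Metric.ball_subset_ball hxy)) hl.2⟩
  rcases Set.eq_empty_or_nonempty {l : ℝ | 0 < l ∧
      volume (Metric.ball (0 : E) ‖y‖) < volume {z | l < g z}} with he | hne
  · unfold schwarz
    rw [he, Real.sSup_empty]
    exact schwarz_nonneg g x
  · exact csSup_le_csSup (aux_bddAbove hp hg hgp hx) hne hsub

lemma aux_levelset_ball (hN : 1 ≤ N) {g : E → ℝ} (hg : Measurable g)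
    (hae : ∀ᵐ z : E × E ∂(volume.prod volume), ‖z.1‖ ≤ ‖z.2‖ → g z.2 ≤ g z.1)
    {l : ℝ} (hfin : volume {y : E | l < g y} ≠ ⊤) :
    volume ({y : E | l < g y} \ Metric.ball (0 : E) (Rad N (volume {y : E | l < g y}))) = 0 ∧
    volume (Metric.ball (0 : E) (Rad N (volume {y : E | l < g y})) \ {y : E | l < g y}) = 0 := by
  set m := volume {y : E | l < g y} with hm
  set B := Metric.ball (0 : E) (Rad N m) with hB
  set Ee := {y : E | l < g y} with hEe
  have hEmeas : MeasurableSet Ee := measurableSet_lt measurable_const hg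
  have hBmeas : MeasurableSet B := measurableSet_ball
  have hBvol : volume B = m := aux_vol_ball_Rad hN hfin
  have hnull : (volume.prod volume) {z : E × E | ¬ (‖z.1‖ ≤ ‖z.2‖ → g z.2 ≤ g z.1)} = 0 :=
    ae_iff.mp hae
  have hkey : volume (B \ Ee) * volume (Ee \ B) = 0 := by
    rw [← Measure.prod_prod]
    refine measure_mono_null ?_ hnull
    rintro ⟨x, y⟩ ⟨hx, hy⟩
    simp only [Set.mem_setOf_eq]
    push_neg
    have hxB : ‖x‖ < Rad N m := mem_ball_zero_iff.mp hx.1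
    have hyB : Rad N m ≤ ‖y‖ := not_lt.mp (fun h => hy.2 (mem_ball_zero_iff.mpr h))
    have hgx : g x ≤ l := not_lt.mp hx.2
    have hgy : l < g y := hy.1
    exact ⟨hxB.le.trans hyB, lt_of_le_of_lt hgx hgy⟩
  have h1 : volume (Ee ∩ B) + volume (Ee \ B) = m := by
    rw [measure_inter_add_diff Ee hBmeas]
  have h2 : volume (B ∩ Ee) + volume (B \ Ee) = m := by
    rw [measure_inter_add_diff B hEmeas, hBvol]
  have hIfin : volume (Ee ∩ B) ≠ ⊤ :=
    ne_top_of_le_ne_top hfin (measure_mono Set.inter_subset_left)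
  rw [Set.inter_comm] at h2
  rcases mul_eq_zero.mp hkey with h | h
  · refine ⟨?_, h⟩
    have h1' : volume (Ee ∩ B) + volume (Ee \ B) = volume (Ee ∩ B) + 0 := by
      rw [add_zero, h1, ← h2, h, add_zero]
    exact (ENNReal.add_right_inj hIfin).mp h1'
  · refine ⟨h, ?_⟩
    have h2' : volume (Ee ∩ B) + volume (B \ Ee) = volume (Ee ∩ B) + 0 := by
      rw [add_zero, h2, ← h1, h, add_zero]
    exact (ENNReal.add_right_inj hIfin).mp h2'

lemma aux_prod_left_null {A : Set E} (hA : volume A = 0) :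
    (volume.prod volume) {z : E × E | z.1 ∈ A} = 0 := by
  have h : {z : E × E | z.1 ∈ A} = A ×ˢ (Set.univ : Set E) := by
    ext z; simp [Set.mem_prod]
  rw [h, Measure.prod_prod, hA, zero_mul]

lemma aux_prod_right_null {A : Set E} (hA : volume A = 0) :
    (volume.prod volume) {z : E × E | z.2 ∈ A} = 0 := by
  have h : {z : E × E | z.2 ∈ A} = (Set.univ : Set E) ×ˢ A := by
    ext z; simp [Set.mem_prod]
  rw [h, Measure.prod_prod, hA, mul_zero]

lemma aux_zero_null (hN : 1 ≤ N) : volume ({0} : Set E) = 0 := by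
  haveI := aux_nontrivial hN
  have hbt : (⊥ : Submodule ℝ (EuclideanSpace ℝ (Fin N))) ≠ ⊤ := by
    obtain ⟨x, hx⟩ := exists_ne (0 : E)
    intro h
    have hx' : x ∈ (⊥ : Submodule ℝ (EuclideanSpace ℝ (Fin N))) := h.symm ▸ Submodule.mem_top
    exact hx ((Submodule.mem_bot ℝ).mp hx')
  have := Measure.addHaar_submodule (volume : Measure (EuclideanSpace ℝ (Fin N))) ⊥ hbt
  simpa using this

lemma aux_rat_eq {a b : ℝ} (ha : 0 ≤ a) (hb : 0 ≤ b)
    (h : ∀ q : ℚ, 0 < (q:ℝ) → ((q:ℝ) < a ↔ (q:ℝ) < b)) : a = b := by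
  by_contra hne
  rcases lt_or_gt_of_ne hne with hlt | hlt
  · obtain ⟨q, hq1, hq2⟩ := exists_rat_btwn hlt
    have hq0 : 0 < (q:ℝ) := lt_of_le_of_lt ha hq1
    exact absurd ((h q hq0).mpr hq2) (not_lt.mpr hq1.le)
  · obtain ⟨q, hq1, hq2⟩ := exists_rat_btwn hlt
    have hq0 : 0 < (q:ℝ) := lt_of_le_of_lt hb hq1
    exact absurd ((h q hq0).mp hq2) (not_lt.mpr hq1.le)

end Aux

/-- For nonnegative `u ∈ L^p(ℝ^N)`, `u = u⋆` a.e. if and only if for almost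
every pair `(x, y) ∈ ℝ^N × ℝ^N` (product Lebesgue measure) with `‖x‖ ≤ ‖y‖` one has
`u x ≥ u y`. -/
theorem statement6 {N : ℕ} (hN : 1 ≤ N) (p : ℝ) (hp : 1 ≤ p)
    (u : EuclideanSpace ℝ (Fin N) → ℝ)
    (hu : MemLp u (ENNReal.ofReal p) volume) (hu0 : ∀ x, 0 ≤ u x) :
    u =ᵐ[volume] schwarz u ↔
      ∀ᵐ z : EuclideanSpace ℝ (Fin N) × EuclideanSpace ℝ (Fin N)
        ∂(volume.prod volume), ‖z.1‖ ≤ ‖z.2‖ → u z.2 ≤ u z.1 := by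
  classical
  set g : EuclideanSpace ℝ (Fin N) → ℝ :=
    fun x => max (hu.aestronglyMeasurable.mk u x) 0 with hgdef
  have hg : Measurable g :=
    (hu.aestronglyMeasurable.measurable_mk).max measurable_const
  have hug : u =ᵐ[volume] g := by
    filter_upwards [hu.aestronglyMeasurable.ae_eq_mk] with x hx
    rw [hgdef]; simp only
    rw [← hx, max_eq_left (hu0 x)]
  have hgp : MemLp g (ENNReal.ofReal p) volume := hu.ae_eq hug
  have hg0 : ∀ x, 0 ≤ g x := fun x => le_max_right _ _
  -- schwarz is invariant under a.e. modification
  have hsch : schwarz u = schwarz g := by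
    funext x
    unfold schwarz
    have hvol : ∀ l : ℝ, volume {y | l < u y} = volume {y | l < g y} := by
      intro l
      apply measure_congr
      rw [Filter.eventuallyEq_set]
      filter_upwards [hug] with y hy
      simp [hy]
    congr 1
    ext l
    simp only [Set.mem_setOf_eq, hvol l]
  -- transfer the a.e. equalities to products
  have hprod : ∀ᵐ z : EuclideanSpace ℝ (Fin N) × EuclideanSpace ℝ (Fin N)
      ∂(volume.prod volume), u z.1 = g z.1 ∧ u z.2 = g z.2 := by
    have hA : volume {x : EuclideanSpace ℝ (Fin N) | ¬ u x = g x} = 0 := ae_iff.mp hug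
    rw [ae_iff]
    refine measure_mono_null ?_
      (measure_union_null (aux_prod_left_null hA) (aux_prod_right_null hA))
    intro z hz
    simp only [Set.mem_setOf_eq, not_and_or] at hz ⊢
    rcases hz with h | h
    · exact Or.inl h
    · exact Or.inr h
  have hne0 : ∀ᵐ x : EuclideanSpace ℝ (Fin N) ∂volume, x ≠ 0 := by
    rw [ae_iff]
    refine measure_mono_null ?_ (aux_zero_null hN)
    intro x hx
    simp only [Set.mem_setOf_eq, not_not] at hx
    simp [hx]
  constructor
  · -- forward
    intro h
    have hgL : g =ᵐ[volume] schwarz g := by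
      have h1 : g =ᵐ[volume] schwarz u := hug.symm.trans h
      rwa [hsch] at h1
    have hgood : volume {x : EuclideanSpace ℝ (Fin N) |
        ¬ (g x = schwarz g x ∧ x ≠ 0)} = 0 := by
      rw [← ae_iff]
      filter_upwards [hgL, hne0] with x h1 h2
      exact ⟨h1, h2⟩
    have hfor : ∀ᵐ z : EuclideanSpace ℝ (Fin N) × EuclideanSpace ℝ (Fin N)
        ∂(volume.prod volume),
        (g z.1 = schwarz g z.1 ∧ z.1 ≠ 0) ∧ (g z.2 = schwarz g z.2 ∧ z.2 ≠ 0) := by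
      rw [ae_iff]
      refine measure_mono_null ?_
        (measure_union_null (aux_prod_left_null hgood) (aux_prod_right_null hgood))
      intro z hz
      simp only [Set.mem_setOf_eq, not_and_or] at hz ⊢
      exact hz
    filter_upwards [hfor, hprod] with z hz huz hle
    rw [huz.1, huz.2, hz.1.1, hz.2.1]
    exact schwarz_anti hp hg hgp hz.1.2 hle
  · -- backward
    intro h
    have haeg : ∀ᵐ z : EuclideanSpace ℝ (Fin N) × EuclideanSpace ℝ (Fin N)
        ∂(volume.prod volume), ‖z.1‖ ≤ ‖z.2‖ → g z.2 ≤ g z.1 := by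
      filter_upwards [h, hprod] with z hz huz hle
      rw [← huz.1, ← huz.2]
      exact hz hle
    have hQ : ∀ q : ℚ, ∀ᵐ x : EuclideanSpace ℝ (Fin N) ∂volume,
        0 < (q:ℝ) → (((q:ℝ) < g x) ↔ ((q:ℝ) < schwarz g x)) := by
      intro q
      by_cases hq : 0 < (q:ℝ)
      · have hfin : volume {y : EuclideanSpace ℝ (Fin N) | (q:ℝ) < g y} ≠ ⊤ :=
          aux_levelset_finite hp hgp hq
        obtain ⟨hd1, hd2⟩ := aux_levelset_ball hN hg haeg hfin
        have hiff : ∀ᵐ x : EuclideanSpace ℝ (Fin N) ∂volume,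
            (x ∈ {y : EuclideanSpace ℝ (Fin N) | (q:ℝ) < g y} ↔
              x ∈ Metric.ball (0 : EuclideanSpace ℝ (Fin N))
                (Rad N (volume {y : EuclideanSpace ℝ (Fin N) | (q:ℝ) < g y}))) := by
          rw [← Filter.eventuallyEq_set]
          exact ae_eq_set.mpr ⟨hd1, hd2⟩
        filter_upwards [hiff, hne0] with x hx hx0
        intro _
        constructor
        · intro hlt
          exact (schwarz_gt_iff hp hg hgp hx0 hq).mpr
            ((aux_ball_lt_iff hN hfin x).mpr (mem_ball_zero_iff.mp (hx.mp hlt)))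
        · intro hlt
          exact hx.mpr (mem_ball_zero_iff.mpr ((aux_ball_lt_iff hN hfin x).mp
            ((schwarz_gt_iff hp hg hgp hx0 hq).mp hlt)))
      · filter_upwards with x
        intro hq'
        exact absurd hq' hq
    have hall : ∀ᵐ x : EuclideanSpace ℝ (Fin N) ∂volume,
        ∀ q : ℚ, 0 < (q:ℝ) → (((q:ℝ) < g x) ↔ ((q:ℝ) < schwarz g x)) :=
      ae_all_iff.mpr hQ
    have hgfinal : g =ᵐ[volume] schwarz g := by
      filter_upwards [hall] with x hx
      exact aux_rat_eq (hg0 x) (schwarz_nonneg g x) hx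
    rw [hsch]
    exact hug.trans hgfinal
end

section
/- Let N ≥ 1, 1 ≤ p < ∞, let H ⊂ ℝ^N be a closed halfspace, and let (u_n)_{n∈ℕ} be a sequence of nonnegative functions in L^p(ℝ^N) converging in L^p(ℝ^N) to a nonnegative function u ∈ L^p(ℝ^N). Then u_n^H ∈ L^p(ℝ^N) for each n, u^H ∈ L^p(ℝ^N), and u_n^H → u^H in L^p(ℝ^N). -/
open MeasureTheory Filter

section aux

variable {N : ℕ} {a : EuclideanSpace ℝ (Fin N)} {b : ℝ}

lemma reflectH_eq (ha : ‖a‖ = 1) (x : EuclideanSpace ℝ (Fin N)) :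
    reflectH a b x = ((Submodule.reflection (ℝ ∙ a)ᗮ : EuclideanSpace ℝ (Fin N) ≃ₗᵢ[ℝ] _) x) + (2*b) • a := by
  rw [Submodule.reflection_orthogonal_apply, Submodule.reflection_singleton_apply]
  simp only [reflectH, ha]
  push_cast
  rw [one_pow, div_one]
  module

lemma reflectH_mp (ha : ‖a‖ = 1) :
    MeasurePreserving (reflectH a b) (volume : Measure (EuclideanSpace ℝ (Fin N))) volume := by
  have heq : reflectH a b = (fun x => x + (2*b) • a) ∘
      (Submodule.reflection (ℝ ∙ a)ᗮ : EuclideanSpace ℝ (Fin N) ≃ₗᵢ[ℝ] _) := funext fun x => reflectH_eq ha x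
  rw [heq]
  exact (measurePreserving_add_right volume _).comp
    (Submodule.reflection (ℝ ∙ a)ᗮ).measurePreserving

lemma integral_reflectH (ha : ‖a‖ = 1) {f : EuclideanSpace ℝ (Fin N) → ℝ}
    (hf : AEStronglyMeasurable f volume) :
    ∫ x, f (reflectH a b x) = ∫ x, f x := by
  have h := reflectH_mp (b := b) ha
  rw [← MeasureTheory.integral_map h.aemeasurable (by rwa [h.map_eq]), h.map_eq]

lemma pol_aesm (ha : ‖a‖ = 1) {u : EuclideanSpace ℝ (Fin N) → ℝ}
    (hu : AEStronglyMeasurable u volume) :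
    AEStronglyMeasurable (polarization a b u) volume := by
  have hσ : AEStronglyMeasurable (fun x => u (reflectH a b x)) volume :=
    hu.comp_measurePreserving (reflectH_mp ha)
  have hS : MeasurableSet {x : EuclideanSpace ℝ (Fin N) | (inner ℝ a x : ℝ) ≤ b} :=
    measurableSet_le (Continuous.measurable (Continuous.inner continuous_const continuous_id)) measurable_const
  have hF : AEStronglyMeasurable (fun x => max (u x) (u (reflectH a b x))) volume := hu.sup hσ
  have hG : AEStronglyMeasurable (fun x => min (u x) (u (reflectH a b x))) volume := hu.inf hσ
  have heq : polarization a b u =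
      Set.indicator {x | (inner ℝ a x : ℝ) ≤ b} (fun x => max (u x) (u (reflectH a b x))) +
      Set.indicator {x | (inner ℝ a x : ℝ) ≤ b}ᶜ (fun x => min (u x) (u (reflectH a b x))) := by
    funext x
    by_cases hx : (inner ℝ a x : ℝ) ≤ b
    · have h1 : x ∈ {y : EuclideanSpace ℝ (Fin N) | (inner ℝ a y : ℝ) ≤ b} := hx
      simp only [Pi.add_apply]
      rw [Set.indicator_of_mem h1, Set.indicator_of_notMem (Set.notMem_compl_iff.mpr h1), add_zero,
        polarization, if_pos hx]
    · have h1 : x ∈ {y : EuclideanSpace ℝ (Fin N) | (inner ℝ a y : ℝ) ≤ b}ᶜ := hx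
      simp only [Pi.add_apply]
      rw [Set.indicator_of_notMem (Set.notMem_of_mem_compl h1), Set.indicator_of_mem h1,
        zero_add, polarization, if_neg hx]
  rw [heq]
  exact (hF.indicator hS).add (hG.indicator hS.compl)

lemma abs_pol_le (u : EuclideanSpace ℝ (Fin N) → ℝ) (x : EuclideanSpace ℝ (Fin N)) :
    |polarization a b u x| ≤ |u x| + |u (reflectH a b x)| := by
  unfold polarization
  split_ifs
  · rcases max_choice (u x) (u (reflectH a b x)) with h | h <;> rw [h]
    · exact le_add_of_nonneg_right (abs_nonneg _)
    · exact le_add_of_nonneg_left (abs_nonneg _)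
  · rcases min_choice (u x) (u (reflectH a b x)) with h | h <;> rw [h]
    · exact le_add_of_nonneg_right (abs_nonneg _)
    · exact le_add_of_nonneg_left (abs_nonneg _)

lemma pol_memLp (ha : ‖a‖ = 1) {q : ENNReal} {u : EuclideanSpace ℝ (Fin N) → ℝ}
    (hu : MemLp u q volume) : MemLp (polarization a b u) q volume := by
  have hσ : MemLp (fun x => u (reflectH a b x)) q volume :=
    hu.comp_measurePreserving (reflectH_mp ha)
  refine MemLp.of_le (hu.norm.add hσ.norm) (pol_aesm ha hu.aestronglyMeasurable)
    (ae_of_all _ fun x => ?_)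
  have h := abs_pol_le (a := a) (b := b) u x
  simp only [Pi.add_apply, Real.norm_eq_abs]
  exact h.trans (le_abs_self _)

lemma abs_pol_sub (u v : EuclideanSpace ℝ (Fin N) → ℝ) (x : EuclideanSpace ℝ (Fin N)) :
    |polarization a b u x - polarization a b v x| ≤
      max |u x - v x| |u (reflectH a b x) - v (reflectH a b x)| := by
  unfold polarization
  split_ifs
  · exact abs_max_sub_max_le_max _ _ _ _
  · exact abs_min_sub_min_le_max _ _ _ _

end aux

/-- Polarization is continuous on the nonnegative functions of `L^p(ℝ^N)`:
if nonnegative `u_n ∈ L^p` converge to a nonnegative `u ∈ L^p` in `L^p`, then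
`u_n^H, u^H ∈ L^p` and `u_n^H → u^H` in `L^p`. -/
theorem statement14 {N : ℕ} (hN : 1 ≤ N) (p : ℝ) (hp : 1 ≤ p)
    (a : EuclideanSpace ℝ (Fin N)) (b : ℝ) (ha : ‖a‖ = 1)
    (useq : ℕ → EuclideanSpace ℝ (Fin N) → ℝ) (u : EuclideanSpace ℝ (Fin N) → ℝ)
    (hseq : ∀ n, MemLp (useq n) (ENNReal.ofReal p) volume)
    (hseq0 : ∀ n x, 0 ≤ useq n x)
    (hu : MemLp u (ENNReal.ofReal p) volume) (hu0 : ∀ x, 0 ≤ u x)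
    (hconv : Filter.Tendsto (fun n => ∫ x, |useq n x - u x| ^ p) atTop (nhds 0)) :
    (∀ n, MemLp (polarization a b (useq n)) (ENNReal.ofReal p) volume) ∧
      MemLp (polarization a b u) (ENNReal.ofReal p) volume ∧
        Filter.Tendsto (fun n => ∫ x, |polarization a b (useq n) x - polarization a b u x| ^ p)
          atTop (nhds 0) := by
  have hp0 : 0 < p := lt_of_lt_of_le one_pos hp
  have hq0 : (ENNReal.ofReal p) ≠ 0 := by
    simp only [ne_eq, ENNReal.ofReal_eq_zero, not_le]; linarith
  have hqt : (ENNReal.ofReal p) ≠ ⊤ := ENNReal.ofReal_ne_top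
  refine ⟨fun n => pol_memLp ha (hseq n), pol_memLp ha hu, ?_⟩
  have key : ∀ n, ∫ x, |polarization a b (useq n) x - polarization a b u x| ^ p ≤
      2 * ∫ x, |useq n x - u x| ^ p := by
    intro n
    have hfm : MemLp (fun x => useq n x - u x) (ENNReal.ofReal p) volume := (hseq n).sub hu
    have hfint : Integrable (fun x => |useq n x - u x| ^ p) volume := by
      have := hfm.integrable_norm_rpow hq0 hqt
      simpa [Real.norm_eq_abs, ENNReal.toReal_ofReal hp0.le] using this
    have hfσint : Integrable (fun x => |useq n (reflectH a b x) - u (reflectH a b x)| ^ p)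
        volume := by
      have := ((reflectH_mp (b := b) ha).integrable_comp hfint.aestronglyMeasurable).mpr hfint
      simpa [Function.comp_def] using this
    have hgm : MemLp (fun x => polarization a b (useq n) x - polarization a b u x)
        (ENNReal.ofReal p) volume := (pol_memLp ha (hseq n)).sub (pol_memLp ha hu)
    have hgint : Integrable
        (fun x => |polarization a b (useq n) x - polarization a b u x| ^ p) volume := by
      have := hgm.integrable_norm_rpow hq0 hqt
      simpa [Real.norm_eq_abs, ENNReal.toReal_ofReal hp0.le] using this
    have hbound : ∀ x, |polarization a b (useq n) x - polarization a b u x| ^ p ≤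
        |useq n x - u x| ^ p + |useq n (reflectH a b x) - u (reflectH a b x)| ^ p := by
      intro x
      have h1 := abs_pol_sub (a := a) (b := b) (useq n) u x
      have h2 : |polarization a b (useq n) x - polarization a b u x| ^ p ≤
          (max |useq n x - u x| |useq n (reflectH a b x) - u (reflectH a b x)|) ^ p :=
        Real.rpow_le_rpow (abs_nonneg _) h1 hp0.le
      refine h2.trans ?_
      rcases max_cases |useq n x - u x| |useq n (reflectH a b x) - u (reflectH a b x)| with
        ⟨h, _⟩ | ⟨h, _⟩ <;> rw [h]
      · exact le_add_of_nonneg_right (Real.rpow_nonneg (abs_nonneg _) _)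
      · exact le_add_of_nonneg_left (Real.rpow_nonneg (abs_nonneg _) _)
    calc ∫ x, |polarization a b (useq n) x - polarization a b u x| ^ p
        ≤ ∫ x, (|useq n x - u x| ^ p +
            |useq n (reflectH a b x) - u (reflectH a b x)| ^ p) :=
          integral_mono hgint (hfint.add hfσint) hbound
      _ = (∫ x, |useq n x - u x| ^ p) +
            ∫ x, |useq n (reflectH a b x) - u (reflectH a b x)| ^ p :=
          integral_add hfint hfσint
      _ = 2 * ∫ x, |useq n x - u x| ^ p := by
          rw [integral_reflectH (b := b) ha (f := fun x => |useq n x - u x| ^ p)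
            hfint.aestronglyMeasurable]
          ring
  have hnn : ∀ n, 0 ≤ ∫ x, |polarization a b (useq n) x - polarization a b u x| ^ p :=
    fun n => integral_nonneg fun x => Real.rpow_nonneg (abs_nonneg _) _
  have h2 : Tendsto (fun n => 2 * ∫ x, |useq n x - u x| ^ p) atTop (nhds 0) := by
    simpa using hconv.const_mul 2
  exact squeeze_zero hnn key h2
end
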